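/- Let k ≥ 2. At every point of ℝ^{2(k+2)} where P_1 ≠ 0 and p_y ≠ 0, the differentials of the k+2 functions H, p_x, p_y, C̃_2,…,C̃_k (where C̃_i := C_i(P_2,…,P_{k+2})) are linearly independent. -/

import Mathlib

/-- The power functions `P_1, …, P_{k+2}` (0-indexed: `powerFn k a` is `P_{a+1}`) on the
phase space `T^* J^k ≅ ℝ^{k+2} × ℝ^{k+2}`.  Configuration coordinates are indexed so that
`q 0 = x`, `q i = u_{k+1-i}` for `1 ≤ i ≤ k`, `q (k+1) = y`, and `p i` is the momentum
conjugate to `q i` (so `p 0 = p_x`, `p 1 = p_k`, …, `p k = p_1`, `p (k+1) = p_y`).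
Then `P_1 = p_x + u_1 p_y + ∑_{i=2}^k u_i p_{i-1} = p 0 + ∑_{j=1}^{k} q j * p (j+1)`,
and `P_m = p (m-1)` for `2 ≤ m ≤ k+2`. -/
noncomputable def powerFn (k : ℕ) (a : Fin (k + 2))
    (z : (Fin (k + 2) → ℝ) × (Fin (k + 2) → ℝ)) : ℝ :=
  if a = ⟨0, by omega⟩ then
    z.2 ⟨0, by omega⟩ + ∑ j : Fin k, z.1 ⟨j.1 + 1, by omega⟩ * z.2 ⟨j.1 + 2, by omega⟩
  else z.2 a

/-- The sub-Riemannian geodesic Hamiltonian `H = (1/2)(P_1² + P_2²)`. -/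
noncomputable def jetHam (k : ℕ) (z : (Fin (k + 2) → ℝ) × (Fin (k + 2) → ℝ)) : ℝ :=
  (1 / 2) * (powerFn k ⟨0, by omega⟩ z ^ 2 + powerFn k ⟨1, by omega⟩ z ^ 2)

/-- The canonical Poisson bracket `{f,g} = ∑_q (∂f/∂q ∂g/∂p_q − ∂f/∂p_q ∂g/∂q)` on
`ℝ^{2(k+2)} = (Fin (k+2) → ℝ) × (Fin (k+2) → ℝ)` (first factor: configuration coordinates,
second factor: conjugate momenta). -/
noncomputable def poissonBracket (k : ℕ)
    (f g : ((Fin (k + 2) → ℝ) × (Fin (k + 2) → ℝ)) → ℝ)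
    (z : (Fin (k + 2) → ℝ) × (Fin (k + 2) → ℝ)) : ℝ :=
  ∑ i : Fin (k + 2),
    (fderiv ℝ f z ((Pi.single i 1 : Fin (k + 2) → ℝ), (0 : Fin (k + 2) → ℝ)) *
        fderiv ℝ g z ((0 : Fin (k + 2) → ℝ), (Pi.single i 1 : Fin (k + 2) → ℝ)) -
      fderiv ℝ f z ((0 : Fin (k + 2) → ℝ), (Pi.single i 1 : Fin (k + 2) → ℝ)) *
        fderiv ℝ g z ((Pi.single i 1 : Fin (k + 2) → ℝ), (0 : Fin (k + 2) → ℝ)))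

/-- The Casimir functions `C_1, …, C_k` of the variables `(P_2, …, P_{k+2})`:
`C_1 = P_{k+2}` and, for `2 ≤ i ≤ k`,
`C_i = P_{k+2}^{i-1} P_{k+2-i} + ∑_{j=1}^{i-2} (−1)^j P_{k+2}^{i-1-j} P_{k+2-i+j} P_{k+1}^j/j!
      + (−1)^{i-1} P_{k+1}^i/((i−2)!·i)`.
Here `P : ℕ → ℝ` records the values of the variables (1-based indexing). -/
noncomputable def casimir (k i : ℕ) (P : ℕ → ℝ) : ℝ :=
  if i = 1 then P (k + 2)
  else
    P (k + 2) ^ (i - 1) * P (k + 2 - i)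
      + ∑ j ∈ Finset.Icc 1 (i - 2),
          (-1 : ℝ) ^ j * P (k + 2) ^ (i - 1 - j) * P (k + 2 - i + j) * P (k + 1) ^ j
            / (Nat.factorial j : ℝ)
      + (-1 : ℝ) ^ (i - 1) * P (k + 1) ^ i / ((Nat.factorial (i - 2) : ℝ) * (i : ℝ))

/-- The values of the power functions `P_1, …, P_{k+2}` at a phase point, with 1-based
indexing (so `phaseVals k z m = P_m(z)` for `1 ≤ m ≤ k+2`, and `0` otherwise). -/
noncomputable def phaseVals (k : ℕ) (z : (Fin (k + 2) → ℝ) × (Fin (k + 2) → ℝ)) : ℕ → ℝ :=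
  fun m => if h : 1 ≤ m ∧ m ≤ k + 2 then powerFn k ⟨m - 1, by omega⟩ z else 0

/-- The `k+2` first integrals: `integralFamily k 0 = H`, `integralFamily k 1 = p_x`,
`integralFamily k 2 = p_y`, and `integralFamily k j = C̃_{j-1} = C_{j-1}(P_2, …, P_{k+2})`
for `3 ≤ j ≤ k+1`. -/
noncomputable def integralFamily (k : ℕ) (j : Fin (k + 2)) :
    ((Fin (k + 2) → ℝ) × (Fin (k + 2) → ℝ)) → ℝ :=
  if j.1 = 0 then jetHam k
  else if j.1 = 1 then fun z => z.2 ⟨0, by omega⟩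
  else if j.1 = 2 then fun z => z.2 ⟨k + 1, by omega⟩
  else fun z => casimir k (j.1 - 1) (phaseVals k z)



noncomputable def coordP (k m : ℕ) (z : (Fin (k+2) → ℝ) × (Fin (k+2) → ℝ)) : ℝ :=
  if h : m < k + 2 then z.2 ⟨m, h⟩ else 0

noncomputable def coordQ (k m : ℕ) (z : (Fin (k+2) → ℝ) × (Fin (k+2) → ℝ)) : ℝ :=
  if h : m < k + 2 then z.1 ⟨m, h⟩ else 0

noncomputable def coordPL (k m : ℕ) : ((Fin (k+2) → ℝ) × (Fin (k+2) → ℝ)) →L[ℝ] ℝ :=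
  if h : m < k + 2 then
    (ContinuousLinearMap.proj (⟨m, h⟩ : Fin (k+2))).comp
      (ContinuousLinearMap.snd ℝ (Fin (k+2) → ℝ) (Fin (k+2) → ℝ))
  else 0

noncomputable def coordQL (k m : ℕ) : ((Fin (k+2) → ℝ) × (Fin (k+2) → ℝ)) →L[ℝ] ℝ :=
  if h : m < k + 2 then
    (ContinuousLinearMap.proj (⟨m, h⟩ : Fin (k+2))).comp
      (ContinuousLinearMap.fst ℝ (Fin (k+2) → ℝ) (Fin (k+2) → ℝ))
  else 0

lemma coordP_eq (k m : ℕ) (h : m < k+2) (z : (Fin (k+2) → ℝ) × (Fin (k+2) → ℝ)) :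
    coordP k m z = z.2 ⟨m, h⟩ := dif_pos h

lemma coordQ_eq (k m : ℕ) (h : m < k+2) (z : (Fin (k+2) → ℝ) × (Fin (k+2) → ℝ)) :
    coordQ k m z = z.1 ⟨m, h⟩ := dif_pos h

lemma coordP_hasFDerivAt (k m : ℕ) (z : (Fin (k+2) → ℝ) × (Fin (k+2) → ℝ)) :
    HasFDerivAt (coordP k m) (coordPL k m) z := by
  by_cases h : m < k + 2
  · have he : coordP k m = fun z : (Fin (k+2) → ℝ) × (Fin (k+2) → ℝ) => z.2 ⟨m, h⟩ :=
      funext fun z => dif_pos h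
    rw [he, coordPL, dif_pos h]
    exact ((ContinuousLinearMap.proj (⟨m, h⟩ : Fin (k+2))).comp
      (ContinuousLinearMap.snd ℝ (Fin (k+2) → ℝ) (Fin (k+2) → ℝ))).hasFDerivAt
  · have he : coordP k m = fun _ : (Fin (k+2) → ℝ) × (Fin (k+2) → ℝ) => (0:ℝ) :=
      funext fun z => dif_neg h
    rw [he, coordPL, dif_neg h]
    exact hasFDerivAt_const 0 z

lemma coordQ_hasFDerivAt (k m : ℕ) (z : (Fin (k+2) → ℝ) × (Fin (k+2) → ℝ)) :
    HasFDerivAt (coordQ k m) (coordQL k m) z := by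
  by_cases h : m < k + 2
  · have he : coordQ k m = fun z : (Fin (k+2) → ℝ) × (Fin (k+2) → ℝ) => z.1 ⟨m, h⟩ :=
      funext fun z => dif_pos h
    rw [he, coordQL, dif_pos h]
    exact ((ContinuousLinearMap.proj (⟨m, h⟩ : Fin (k+2))).comp
      (ContinuousLinearMap.fst ℝ (Fin (k+2) → ℝ) (Fin (k+2) → ℝ))).hasFDerivAt
  · have he : coordQ k m = fun _ : (Fin (k+2) → ℝ) × (Fin (k+2) → ℝ) => (0:ℝ) :=
      funext fun z => dif_neg h
    rw [he, coordQL, dif_neg h]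
    exact hasFDerivAt_const 0 z

lemma coordPL_fst (k m : ℕ) (w : Fin (k+2) → ℝ) : coordPL k m (w, 0) = 0 := by
  unfold coordPL; split <;> simp

lemma coordQL_snd (k m : ℕ) (w : Fin (k+2) → ℝ) : coordQL k m (0, w) = 0 := by
  unfold coordQL; split <;> simp

lemma coordPL_single (k m : ℕ) (a : Fin (k+2)) :
    coordPL k m (0, Pi.single a 1) = if m = a.1 then 1 else 0 := by
  unfold coordPL
  split
  · rename_i h
    simp [Pi.single_apply, Fin.ext_iff]
  · rename_i h
    have := a.2
    simp only [ContinuousLinearMap.zero_apply]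
    rw [if_neg (by omega)]

lemma coordQL_single (k m : ℕ) (a : Fin (k+2)) :
    coordQL k m (Pi.single a 1, 0) = if m = a.1 then 1 else 0 := by
  unfold coordQL
  split
  · rename_i h
    simp [Pi.single_apply, Fin.ext_iff]
  · rename_i h
    have := a.2
    simp only [ContinuousLinearMap.zero_apply]
    rw [if_neg (by omega)]

lemma hasFDerivAt_pow_comp {E : Type*} [NormedAddCommGroup E] [NormedSpace ℝ E]
    {f : E → ℝ} {f' : E →L[ℝ] ℝ} {x : E} (h : HasFDerivAt f f' x) (n : ℕ) :
    HasFDerivAt (fun y => f y ^ n) (((n : ℝ) * f x ^ (n - 1)) • f') x := by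
  induction n with
  | zero => simpa using hasFDerivAt_const (1:ℝ) x
  | succ n ih =>
    have h2 := ih.mul h
    have h3 : f x ^ n • f' + f x • (((n:ℝ) * f x ^ (n-1)) • f')
        = (((n+1 : ℕ) : ℝ) * f x ^ (n+1-1)) • f' := by
      rw [smul_smul, ← add_smul]
      congr 1
      cases n with
      | zero => simp
      | succ m =>
        push_cast [Nat.add_sub_cancel]
        ring
    rw [h3] at h2
    have he : (fun y => f y ^ (n+1)) = fun y => f y ^ n * f y :=
      funext fun y => pow_succ _ _
    rw [he]
    exact h2


lemma phase_coord (k : ℕ) (w : (Fin (k+2) → ℝ) × (Fin (k+2) → ℝ)) (m : ℕ) (hm : 2 ≤ m) :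
    phaseVals k w m = coordP k (m-1) w := by
  unfold phaseVals coordP
  by_cases h : m ≤ k + 2
  · rw [dif_pos ⟨by omega, h⟩, dif_pos (by omega : m - 1 < k + 2)]
    rw [powerFn, if_neg (by simp [Fin.ext_iff]; omega)]
  · rw [dif_neg (by omega), dif_neg (by omega)]

lemma casimir_deriv (k i : ℕ) (hk : 2 ≤ k) (hi2 : 2 ≤ i) (hik : i ≤ k)
    (z : (Fin (k+2) → ℝ) × (Fin (k+2) → ℝ)) :
    ∃ L : ((Fin (k+2) → ℝ) × (Fin (k+2) → ℝ)) →L[ℝ] ℝ,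
      HasFDerivAt (fun w => casimir k i (phaseVals k w)) L z ∧
      (∀ v : Fin (k+2) → ℝ, L (v, 0) = 0) ∧
      (∀ m : Fin (k+2), m.1 < k + 1 - i → L (0, Pi.single m 1) = 0) ∧
      L (0, Pi.single ⟨k + 1 - i, by omega⟩ 1) = z.2 ⟨k+1, by omega⟩ ^ (i - 1) := by
  have hfe : (fun w => casimir k i (phaseVals k w)) =
      fun w : (Fin (k+2) → ℝ) × (Fin (k+2) → ℝ) =>
        coordP k (k+2-1) w ^ (i-1) * coordP k (k+2-i-1) w
        + ∑ j ∈ Finset.Icc 1 (i-2),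
            (-1:ℝ)^j * coordP k (k+2-1) w ^ (i-1-j) * coordP k (k+2-i+j-1) w
              * coordP k (k+1-1) w ^ j * ((Nat.factorial j : ℝ))⁻¹
        + (-1:ℝ)^(i-1) * coordP k (k+1-1) w ^ i * ((Nat.factorial (i-2) : ℝ) * (i:ℝ))⁻¹ := by
    funext w
    rw [casimir, if_neg (by omega)]
    rw [phase_coord k w (k+2) (by omega), phase_coord k w (k+2-i) (by omega),
      phase_coord k w (k+1) (by omega)]
    rw [Finset.sum_congr rfl (fun j hj => by
      rw [phase_coord k w (k+2-i+j) (by omega), div_eq_mul_inv])]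
    rw [div_eq_mul_inv]
  rw [hfe]
  have hA := coordP_hasFDerivAt k (k+2-1) z
  have hB := coordP_hasFDerivAt k (k+2-i-1) z
  have hD := coordP_hasFDerivAt k (k+1-1) z
  refine ⟨_, (((hasFDerivAt_pow_comp hA (i-1)).mul hB).add
      (HasFDerivAt.fun_sum (fun j (_ : j ∈ Finset.Icc 1 (i-2)) =>
        ((((hasFDerivAt_pow_comp hA (i-1-j)).const_mul ((-1:ℝ)^j)).mul
          (coordP_hasFDerivAt k (k+2-i+j-1) z)).mul
            (hasFDerivAt_pow_comp hD j)).mul_const ((Nat.factorial j : ℝ))⁻¹))).add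
      (((hasFDerivAt_pow_comp hD i).const_mul ((-1:ℝ)^(i-1))).mul_const
        ((Nat.factorial (i-2) : ℝ) * (i:ℝ))⁻¹), ?_, ?_, ?_⟩
  · intro v
    simp [ContinuousLinearMap.add_apply, ContinuousLinearMap.smul_apply,
      ContinuousLinearMap.sum_apply, coordPL_fst]
  · intro m hm
    have c1 : ¬(k+1 = m.1) := by omega
    have c2 : ¬(k+2-i-1 = m.1) := by omega
    have c3 : ¬(k = m.1) := by omega
    have c4 : ∀ j : ℕ, ¬(k+2-i+j-1 = m.1) := fun j => by omega
    simp [ContinuousLinearMap.add_apply, ContinuousLinearMap.smul_apply,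
      ContinuousLinearMap.sum_apply, coordPL_single, c1, c2, c3, c4]
  · have c1 : ¬(k+1 = k+1-i) := by omega
    have c2 : (k+2-i-1 = k+1-i) := by omega
    have c3 : ¬(k = k+1-i) := by omega
    have c4 : ∀ j : ℕ, (k+2-i+j-1 = k+1-i) ↔ j = 0 := fun j => by omega
    simp [ContinuousLinearMap.add_apply, ContinuousLinearMap.smul_apply,
      ContinuousLinearMap.sum_apply, coordPL_single, c1, c2, c3, c4,
      Finset.mem_Icc, Finset.sum_ite_eq', coordP_eq k (k+1) (by omega)]

lemma jetHam_deriv (k : ℕ) (hk : 2 ≤ k) (z : (Fin (k+2) → ℝ) × (Fin (k+2) → ℝ)) :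
    ∃ L : ((Fin (k+2) → ℝ) × (Fin (k+2) → ℝ)) →L[ℝ] ℝ,
      HasFDerivAt (jetHam k) L z ∧
      L (Pi.single (⟨k, by omega⟩ : Fin (k+2)) 1, 0)
        = powerFn k ⟨0, Nat.succ_pos _⟩ z * z.2 ⟨k+1, by omega⟩ := by
  have hsum : ∀ w : (Fin (k+2) → ℝ) × (Fin (k+2) → ℝ),
      (∑ j : Fin k, w.1 ⟨j.1 + 1, by omega⟩ * w.2 ⟨j.1 + 2, by omega⟩)
        = ∑ j : Fin k, coordQ k (j.1+1) w * coordP k (j.1+2) w := fun w =>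
    Finset.sum_congr rfl (fun j _ => by
      have hj := j.2
      rw [coordQ_eq k (j.1+1) (by omega), coordP_eq k (j.1+2) (by omega)])
  have hP1 : ∀ w, powerFn k ⟨0, Nat.succ_pos _⟩ w
      = coordP k 0 w + ∑ j : Fin k, coordQ k (j.1+1) w * coordP k (j.1+2) w := fun w => by
    rw [powerFn, if_pos rfl, coordP_eq k 0 (Nat.succ_pos _), hsum]
  have hfe : jetHam k = fun w : (Fin (k+2) → ℝ) × (Fin (k+2) → ℝ) =>
      (1/2 : ℝ) * ((coordP k 0 w + ∑ j : Fin k, coordQ k (j.1+1) w * coordP k (j.1+2) w) ^ 2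
        + coordP k 1 w ^ 2) := by
    funext w
    rw [jetHam, hP1 w, powerFn, if_neg (by simp [Fin.ext_iff]), coordP_eq k 1 (by omega)]
  rw [hfe]
  have hP1d : HasFDerivAt
      (fun w : (Fin (k+2) → ℝ) × (Fin (k+2) → ℝ) =>
        coordP k 0 w + ∑ j : Fin k, coordQ k (j.1+1) w * coordP k (j.1+2) w)
      (coordPL k 0 + ∑ j : Fin k,
        (coordQ k (j.1+1) z • coordPL k (j.1+2) + coordP k (j.1+2) z • coordQL k (j.1+1))) z :=
    (coordP_hasFDerivAt k 0 z).add
      (HasFDerivAt.fun_sum (fun j _ =>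
        (coordQ_hasFDerivAt k (j.1+1) z).mul (coordP_hasFDerivAt k (j.1+2) z)))
  refine ⟨_, ((hasFDerivAt_pow_comp hP1d 2).add
      (hasFDerivAt_pow_comp (coordP_hasFDerivAt k 1 z) 2)).const_mul (1/2 : ℝ), ?_⟩
  have hone : ∀ j : Fin k, j.1 + 1 = k ↔ j = ⟨k-1, by omega⟩ := fun j => by
    rw [Fin.ext_iff]; have := j.2; simp; omega
  simp only [ContinuousLinearMap.add_apply, ContinuousLinearMap.smul_apply,
    ContinuousLinearMap.sum_apply, coordPL_fst, coordQL_single, coordPL_single, hone,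
    smul_eq_mul, mul_zero, zero_add, mul_ite, mul_one, add_zero]
  rw [Finset.sum_ite_eq' Finset.univ (⟨k-1, by omega⟩ : Fin k)]
  simp only [Finset.mem_univ, if_pos]
  rw [hP1 z, coordP_eq k (k-1+2) (by omega)]
  have : (⟨k-1+2, by omega⟩ : Fin (k+2)) = ⟨k+1, by omega⟩ := Fin.ext (by simp; omega)
  rw [this]
  ring

/-- at every point where `P_1 ≠ 0` and `p_y ≠ 0`, the differentials of the
`k+2` functions `H`, `p_x`, `p_y`, `C̃_2, …, C̃_k` are linearly independent. -/
theorem stmt_5 (k : ℕ) (hk : 2 ≤ k)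
    (z : (Fin (k + 2) → ℝ) × (Fin (k + 2) → ℝ))
    (h1 : powerFn k ⟨0, by omega⟩ z ≠ 0)
    (h2 : z.2 ⟨k + 1, by omega⟩ ≠ 0) :
    LinearIndependent ℝ (fun j : Fin (k + 2) => fderiv ℝ (integralFamily k j) z) := by
  rw [Fintype.linearIndependent_iff]
  intro g hg
  have happ : ∀ v : (Fin (k+2) → ℝ) × (Fin (k+2) → ℝ),
      (∑ j : Fin (k+2), g j * fderiv ℝ (integralFamily k j) z v) = 0 := by
    intro v
    have h := congrArg
      (fun L : ((Fin (k+2) → ℝ) × (Fin (k+2) → ℝ)) →L[ℝ] ℝ => L v) hg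
    simpa [ContinuousLinearMap.sum_apply, ContinuousLinearMap.smul_apply] using h
  obtain ⟨LH, hLH, hLHval⟩ := jetHam_deriv k hk z
  have hD0 : fderiv ℝ (integralFamily k ⟨0, by omega⟩) z = LH := by
    have he : integralFamily k ⟨0, by omega⟩ = jetHam k := by
      rw [integralFamily]; norm_num
    rw [he]; exact hLH.fderiv
  have hD1 : fderiv ℝ (integralFamily k ⟨1, by omega⟩) z = coordPL k 0 := by
    have he : integralFamily k ⟨1, by omega⟩ = coordP k 0 := by
      funext w
      rw [integralFamily]
      norm_num
      exact (coordP_eq k 0 (by omega) w).symm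
    rw [he]; exact (coordP_hasFDerivAt k 0 z).fderiv
  have hD2 : fderiv ℝ (integralFamily k ⟨2, by omega⟩) z = coordPL k (k+1) := by
    have he : integralFamily k ⟨2, by omega⟩ = coordP k (k+1) := by
      funext w
      rw [integralFamily]
      norm_num
      exact (coordP_eq k (k+1) (by omega) w).symm
    rw [he]; exact (coordP_hasFDerivAt k (k+1) z).fderiv
  have hcas : ∀ i : ℕ, 2 ≤ i → i ≤ k →
      ∃ L : ((Fin (k+2) → ℝ) × (Fin (k+2) → ℝ)) →L[ℝ] ℝ,
        HasFDerivAt (fun w => casimir k i (phaseVals k w)) L z ∧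
        (∀ v : Fin (k+2) → ℝ, L (v, 0) = 0) ∧
        (∀ m : Fin (k+2), m.1 < k + 1 - i → L (0, Pi.single m 1) = 0) ∧
        L (0, Pi.single ⟨k + 1 - i, by omega⟩ 1) = z.2 ⟨k+1, by omega⟩ ^ (i - 1) :=
    fun i hi2 hik => casimir_deriv k i hk hi2 hik z
  choose Lc hLc hLcq hLclow hLcdiag using hcas
  have hDC : ∀ b : Fin (k+2), ∀ hb : 3 ≤ b.1,
      fderiv ℝ (integralFamily k b) z
        = Lc (b.1-1) (by omega) (by have := b.2; omega) := by
    intro b hb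
    have he : integralFamily k b = fun w => casimir k (b.1-1) (phaseVals k w) := by
      rw [integralFamily, if_neg (by omega), if_neg (by omega), if_neg (by omega)]
    rw [he]; exact (hLc _ _ _).fderiv
  have hq0 : ∀ b : Fin (k+2), b.1 ≠ 0 → ∀ w : Fin (k+2) → ℝ,
      fderiv ℝ (integralFamily k b) z (w, 0) = 0 := by
    intro b hb w
    by_cases e1 : b.1 = 1
    · rw [show b = ⟨1, by omega⟩ from Fin.ext e1, hD1, coordPL_fst]
    · by_cases e2 : b.1 = 2
      · rw [show b = ⟨2, by omega⟩ from Fin.ext e2, hD2, coordPL_fst]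
      · have h3 : 3 ≤ b.1 := by omega
        rw [hDC b h3]; exact hLcq _ _ _ w
  -- Step 0 : coefficient of H vanishes
  have hg0 : g ⟨0, by omega⟩ = 0 := by
    have h := happ (Pi.single ⟨k, by omega⟩ 1, 0)
    rw [Fintype.sum_eq_single (⟨0, by omega⟩ : Fin (k+2))
      (fun b hb => by
        rw [hq0 b (fun e => hb (Fin.ext e))]; ring)] at h
    rw [hD0, hLHval] at h
    exact (mul_eq_zero.mp h).resolve_right (mul_ne_zero h1 h2)
  -- Step 1 : coefficient of p_x vanishes
  have hg1 : g ⟨1, by omega⟩ = 0 := by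
    have h := happ (0, Pi.single ⟨0, by omega⟩ 1)
    have hz : ∀ b : Fin (k+2), b ≠ ⟨1, by omega⟩ →
        g b * fderiv ℝ (integralFamily k b) z (0, Pi.single ⟨0, by omega⟩ 1) = 0 := by
      intro b hb
      by_cases e0 : b.1 = 0
      · rw [show b = ⟨0, by omega⟩ from Fin.ext e0, hg0]; ring
      · by_cases e2 : b.1 = 2
        · rw [show b = ⟨2, by omega⟩ from Fin.ext e2, hD2, coordPL_single,
            if_neg (by omega : ¬ k+1 = (0:ℕ))]
          ring
        · have h3 : 3 ≤ b.1 := by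
            have e1 : b.1 ≠ 1 := fun e => hb (Fin.ext e)
            omega
          rw [hDC b h3, hLclow _ _ _ _ (show (0:ℕ) < k+1-(b.1-1) by
            have := b.2; omega)]
          ring
    rw [Fintype.sum_eq_single _ hz, hD1, coordPL_single] at h
    simpa using h
  -- Step 2 : Casimir coefficients vanish, downward induction
  have hgC : ∀ i : ℕ, ∀ _ : 2 ≤ i, ∀ _ : i ≤ k, g ⟨i+1, by omega⟩ = 0 := by
    have H : ∀ d : ℕ, ∀ i : ℕ, ∀ _ : 2 ≤ i, ∀ _ : i ≤ k, k - i = d → g ⟨i+1, by omega⟩ = 0 := by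
      intro d
      induction d using Nat.strong_induction_on with
      | _ d ih =>
        intro i hi2 hik hd
        have h := happ (0, Pi.single ⟨k+1-i, by omega⟩ 1)
        have hz : ∀ b : Fin (k+2), b ≠ ⟨i+1, by omega⟩ →
            g b * fderiv ℝ (integralFamily k b) z
              (0, Pi.single ⟨k+1-i, by omega⟩ 1) = 0 := by
          intro b hb
          by_cases e0 : b.1 = 0
          · rw [show b = ⟨0, by omega⟩ from Fin.ext e0, hg0]; ring
          · by_cases e1 : b.1 = 1
            · rw [show b = ⟨1, by omega⟩ from Fin.ext e1, hD1, coordPL_single,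
                if_neg (show ¬ (0:ℕ) = k+1-i by omega)]
              ring
            · by_cases e2 : b.1 = 2
              · rw [show b = ⟨2, by omega⟩ from Fin.ext e2, hD2, coordPL_single,
                  if_neg (show ¬ k+1 = k+1-i by omega)]
                ring
              · have h3 : 3 ≤ b.1 := by omega
                by_cases elt : b.1 < i + 1
                · rw [hDC b h3, hLclow _ _ _ _ (show k+1-i < k+1-(b.1-1) by omega)]
                  ring
                · have hbk : b.1 ≤ k + 1 := by have := b.2; omega
                  have hne : b.1 ≠ i + 1 := fun e => hb (Fin.ext e)
                  have hzero : g ⟨(b.1-1)+1, by omega⟩ = 0 :=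
                    ih (k - (b.1-1)) (by omega) (b.1-1) (by omega) (by omega) rfl
                  rw [show b = ⟨(b.1-1)+1, by omega⟩ from Fin.ext (show b.1 = b.1-1+1 by omega), hzero]
                  ring
        rw [Fintype.sum_eq_single _ hz] at h
        rw [hDC ⟨i+1, by omega⟩ (by omega : 3 ≤ i+1)] at h
        have h' : g ⟨i+1, by omega⟩ * (z.2 ⟨k+1, by omega⟩ ^ (i-1)) = 0 := by
          rw [← hLcdiag i hi2 hik]; exact h
        exact (mul_eq_zero.mp h').resolve_right (pow_ne_zero _ h2)
    exact fun i hi2 hik => H (k-i) i hi2 hik rfl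
  -- Step 3 : coefficient of p_y vanishes
  have hg2 : g ⟨2, by omega⟩ = 0 := by
    have h := happ (0, Pi.single ⟨k+1, by omega⟩ 1)
    have hz : ∀ b : Fin (k+2), b ≠ ⟨2, by omega⟩ →
        g b * fderiv ℝ (integralFamily k b) z (0, Pi.single ⟨k+1, by omega⟩ 1) = 0 := by
      intro b hb
      by_cases e0 : b.1 = 0
      · rw [show b = ⟨0, by omega⟩ from Fin.ext e0, hg0]; ring
      · by_cases e1 : b.1 = 1
        · rw [show b = ⟨1, by omega⟩ from Fin.ext e1, hD1, coordPL_single,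
            if_neg (show ¬ (0:ℕ) = k+1 by omega)]
          ring
        · have h3 : 3 ≤ b.1 := by
            have e2 : b.1 ≠ 2 := fun e => hb (Fin.ext e)
            omega
          have hbk : b.1 ≤ k + 1 := by have := b.2; omega
          have hzero : g ⟨(b.1-1)+1, by omega⟩ = 0 :=
            hgC (b.1-1) (by omega) (by omega)
          rw [show b = ⟨(b.1-1)+1, by omega⟩ from Fin.ext (show b.1 = b.1-1+1 by omega), hzero]
          ring
    rw [Fintype.sum_eq_single _ hz, hD2, coordPL_single] at h
    simpa using h
  -- conclusion
  intro j
  by_cases e0 : j.1 = 0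
  · rw [show j = ⟨0, by omega⟩ from Fin.ext e0]; exact hg0
  · by_cases e1 : j.1 = 1
    · rw [show j = ⟨1, by omega⟩ from Fin.ext e1]; exact hg1
    · by_cases e2 : j.1 = 2
      · rw [show j = ⟨2, by omega⟩ from Fin.ext e2]; exact hg2
      · have h3 : 3 ≤ j.1 := by omega
        have hjk : j.1 ≤ k + 1 := by have := j.2; omega
        have := hgC (j.1-1) (by omega) (by omega)
        rw [show j = ⟨(j.1-1)+1, by omega⟩ from Fin.ext (show j.1 = j.1-1+1 by omega)]
        exact this
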